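/- Let N : ℝ → [0,∞) be a Young function, q > 2, and suppose N(r·s) ≤ r^q·(N(s) + 2) for all r ≥ 2 and s ≥ 0. Let (X,μ) be a measure space and f ∈ L¹(μ) ∩ L^q(μ) with f not μ-a.e. zero. Define λ := (2·(∫|f|^q dμ)·(N(1)+2))^{1/q} + 2·(∫|f| dμ)·sup_{0<s≤2} N(s)/s. Then ∫ N(|f|/λ) dμ ≤ 1, and consequently the Luxemburg norm satisfies ‖f‖_{L_N(μ)} ≤ λ. In particular L¹(μ) ∩ L^q(μ) embeds continuously into the Orlicz space L_N(μ). (Paper Lemma 3.2(ii).) -/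

import Mathlib

open Filter MeasureTheory
open scoped ENNReal

/-- A Young function: continuous, convex, even, nonnegative, vanishing exactly at `0`,
with `N s / s → 0` as `s → 0⁺` and `N s / s → ∞` as `s → ∞`. -/
def IsYoungFunction (N : ℝ → ℝ) : Prop :=
  Continuous N ∧ ConvexOn ℝ Set.univ N ∧ (∀ s, N (-s) = N s) ∧
  (∀ s, 0 ≤ N s) ∧ (∀ s, N s = 0 ↔ s = 0) ∧
  Tendsto (fun s => N s / s) (nhdsWithin 0 (Set.Ioi 0)) (nhds 0) ∧
  Tendsto (fun s => N s / s) atTop atTop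

/-- The Luxemburg norm `inf { λ > 0 : ∫ N(f/λ) dμ ≤ 1 }`, with `inf ∅ = ∞`. -/
noncomputable def luxemburgNorm {X : Type*} [MeasurableSpace X] (N : ℝ → ℝ)
    (μ : Measure X) (f : X → ℝ) : ℝ≥0∞ :=
  ⨅ (lam : ℝ) (_ : 0 < lam) (_ : ∫⁻ x, ENNReal.ofReal (N (f x / lam)) ∂μ ≤ 1),
    ENNReal.ofReal lam

/-- Paper Lemma 3.2(ii): `L¹(μ) ∩ L^q(μ)` embeds continuously into the Orlicz space
`L_N(μ)`, with the explicit bound `‖f‖_{L_N} ≤ λ` for the stated `λ`. -/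
theorem stmt1 {X : Type*} [MeasurableSpace X] (μ : Measure X)
    (N : ℝ → ℝ) (hN : IsYoungFunction N) (q : ℝ) (hq : 2 < q)
    (hΔ : ∀ r s : ℝ, 2 ≤ r → 0 ≤ s → N (r * s) ≤ r ^ q * (N s + 2))
    (f : X → ℝ) (hf : Measurable f)
    (hf1 : MemLp f 1 μ) (hfq : MemLp f (ENNReal.ofReal q) μ)
    (hfne : ¬ f =ᵐ[μ] 0) :
    (∫⁻ x, ENNReal.ofReal (N (|f x| /
        ((2 * (∫ x, |f x| ^ q ∂μ) * (N 1 + 2)) ^ (1 / q)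
          + 2 * (∫ x, |f x| ∂μ) * sSup ((fun s => N s / s) '' Set.Ioc (0:ℝ) 2)))) ∂μ) ≤ 1 ∧
    luxemburgNorm N μ f ≤
      ENNReal.ofReal ((2 * (∫ x, |f x| ^ q ∂μ) * (N 1 + 2)) ^ (1 / q)
          + 2 * (∫ x, |f x| ∂μ) * sSup ((fun s => N s / s) '' Set.Ioc (0:ℝ) 2)) := by
  obtain ⟨hNc, hNconv, hNeven, hNnn, hNzero, hNlim0, hNlimT⟩ := hN
  have hq0 : (0:ℝ) < q := by linarith
  have hqne : q ≠ 0 := ne_of_gt hq0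
  set M := sSup ((fun s => N s / s) '' Set.Ioc (0:ℝ) 2) with hMdef
  set I1 := ∫ x, |f x| ∂μ with hI1def
  set Iq := ∫ x, |f x| ^ q ∂μ with hIqdef
  -- boundedness of N s / s on (0,2]
  have hev : ∀ᶠ s in nhdsWithin 0 (Set.Ioi 0), N s / s < 1 :=
    hNlim0.eventually (gt_mem_nhds one_pos)
  rw [eventually_nhdsWithin_iff, Metric.eventually_nhds_iff] at hev
  obtain ⟨δ, hδpos, hδ⟩ := hev
  set c := min δ 2 with hc
  have hcpos : 0 < c := lt_min hδpos two_pos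
  have hcont : ContinuousOn (fun s => N s / s) (Set.Icc c 2) := by
    apply hNc.continuousOn.div continuousOn_id
    exact fun s hs => ne_of_gt (lt_of_lt_of_le hcpos hs.1)
  obtain ⟨K, hK⟩ := isCompact_Icc.bddAbove_image hcont
  have hBdd : BddAbove ((fun s => N s / s) '' Set.Ioc (0:ℝ) 2) := by
    refine ⟨max 1 K, ?_⟩
    rintro y ⟨s, ⟨hs0, hs2⟩, rfl⟩
    by_cases h : s < c
    · refine le_max_of_le_left (le_of_lt (hδ ?_ hs0))
      simp only [Real.dist_eq, sub_zero, abs_of_pos hs0]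
      exact lt_of_lt_of_le h (min_le_left _ _)
    · exact le_max_of_le_right (hK ⟨s, ⟨le_of_not_gt h, hs2⟩, rfl⟩)
  have hMle : ∀ s : ℝ, 0 < s → s ≤ 2 → N s ≤ M * s := by
    intro s hs0 hs2
    have h1 : N s / s ≤ M := le_csSup hBdd ⟨s, ⟨hs0, hs2⟩, rfl⟩
    calc N s = N s / s * s := by field_simp
    _ ≤ M * s := mul_le_mul_of_nonneg_right h1 hs0.le
  have hN2 : 0 < N 2 := by
    rcases lt_or_eq_of_le (hNnn 2) with h | h
    · exact h
    · exfalso; have := (hNzero 2).mp h.symm; norm_num at this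
  have hMpos : 0 < M := by
    have h1 : N 2 / 2 ≤ M := le_csSup hBdd ⟨2, ⟨two_pos, le_refl 2⟩, rfl⟩
    linarith [hN2]
  -- integrability
  have hf1' : Integrable f μ := memLp_one_iff_integrable.mp hf1
  have hfa : Integrable (fun x => |f x|) μ := hf1'.abs
  have hfqint : Integrable (fun x => |f x| ^ q) μ := by
    have hp0 : (ENNReal.ofReal q) ≠ 0 := by
      simp only [ne_eq, ENNReal.ofReal_eq_zero, not_le]; exact hq0
    have h := hfq.integrable_norm_rpow hp0 ENNReal.ofReal_ne_top
    simpa [Real.norm_eq_abs, ENNReal.toReal_ofReal hq0.le] using h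
  -- positivity of the integrals
  have hI1pos : 0 < I1 := by
    rcases lt_or_eq_of_le (integral_nonneg (fun x => abs_nonneg (f x)) : (0:ℝ) ≤ I1) with h | h
    · exact h
    · exfalso
      have h0 : (fun x => |f x|) =ᵐ[μ] 0 :=
        (integral_eq_zero_iff_of_nonneg (fun x => abs_nonneg (f x)) hfa).mp h.symm
      exact hfne (h0.mono fun x hx => abs_eq_zero.mp hx)
  have hIqpos : 0 < Iq := by
    rcases lt_or_eq_of_le (integral_nonneg (fun x => Real.rpow_nonneg (abs_nonneg (f x)) q) :
        (0:ℝ) ≤ Iq) with h | h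
    · exact h
    · exfalso
      have h0 : (fun x => |f x| ^ q) =ᵐ[μ] 0 :=
        (integral_eq_zero_iff_of_nonneg (fun x => Real.rpow_nonneg (abs_nonneg (f x)) q)
          hfqint).mp h.symm
      refine hfne (h0.mono fun x hx => ?_)
      have := (Real.rpow_eq_zero (abs_nonneg (f x)) hqne).mp hx
      exact abs_eq_zero.mp this
  have hN1 : (0:ℝ) < N 1 + 2 := by linarith [hNnn 1]
  set A := (2 * Iq * (N 1 + 2)) ^ (1 / q) with hAdef
  set lam := A + 2 * I1 * M with hlamdef
  have hbase : (0:ℝ) < 2 * Iq * (N 1 + 2) := by positivity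
  have hAnn : 0 ≤ A := Real.rpow_nonneg hbase.le _
  have hAq : A ^ q = 2 * Iq * (N 1 + 2) := by
    rw [hAdef, ← Real.rpow_mul hbase.le, one_div, inv_mul_cancel₀ hqne, Real.rpow_one]
  have hBpos : 0 < 2 * I1 * M := by positivity
  have hlampos : 0 < lam := by rw [hlamdef]; linarith
  have hlamB : 2 * I1 * M ≤ lam := by rw [hlamdef]; linarith
  have hlamA : A ≤ lam := by rw [hlamdef]; linarith
  have hlamq : A ^ q ≤ lam ^ q := Real.rpow_le_rpow hAnn hlamA hq0.le
  have hlamqpos : 0 < lam ^ q := Real.rpow_pos_of_pos hlampos q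
  -- pointwise bound
  have hpt : ∀ t : ℝ, 0 ≤ t → N t ≤ M * t + (N 1 + 2) * t ^ q := by
    intro t ht
    rcases le_or_gt t 2 with h2 | h2
    · rcases eq_or_lt_of_le ht with h0 | h0
      · simp [← h0, (hNzero 0).mpr rfl, Real.zero_rpow hqne]
      · have h1 := hMle t h0 h2
        have h3 : 0 ≤ (N 1 + 2) * t ^ q := by positivity
        linarith
    · have h1 := hΔ t 1 h2.le zero_le_one
      rw [mul_one] at h1
      have hMt : 0 ≤ M * t := mul_nonneg hMpos.le ht
      nlinarith [h1, hMt]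
  -- the comparison function
  set g : X → ℝ := fun x => M / lam * |f x| + (N 1 + 2) / lam ^ q * |f x| ^ q with hgdef
  have hgint : Integrable g μ := (hfa.const_mul _).add (hfqint.const_mul _)
  have hgnn : ∀ x, 0 ≤ g x := by
    intro x
    have : (0:ℝ) ≤ |f x| ^ q := Real.rpow_nonneg (abs_nonneg _) q
    have h1 : 0 ≤ M / lam * |f x| := by positivity
    have h2 : 0 ≤ (N 1 + 2) / lam ^ q * |f x| ^ q := by positivity
    simp only [hgdef]; linarith
  have hgle : ∫ x, g x ∂μ ≤ 1 := by
    have hint : ∫ x, g x ∂μ = M / lam * I1 + (N 1 + 2) / lam ^ q * Iq := by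
      rw [hgdef, integral_add (hfa.const_mul _) (hfqint.const_mul _),
        integral_const_mul, integral_const_mul]
    rw [hint]
    have hb1 : M / lam * I1 ≤ 1 / 2 := by
      rw [div_mul_eq_mul_div, div_le_iff₀ hlampos]
      nlinarith [hlamB]
    have hb2 : (N 1 + 2) / lam ^ q * Iq ≤ 1 / 2 := by
      rw [div_mul_eq_mul_div, div_le_iff₀ hlamqpos]
      nlinarith [hlamq, hAq]
    linarith
  have hptx : ∀ x, N (|f x| / lam) ≤ g x := by
    intro x
    have h1 := hpt (|f x| / lam) (div_nonneg (abs_nonneg _) hlampos.le)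
    have h2 : (|f x| / lam) ^ q = |f x| ^ q / lam ^ q :=
      Real.div_rpow (abs_nonneg _) hlampos.le q
    calc N (|f x| / lam) ≤ M * (|f x| / lam) + (N 1 + 2) * ((|f x| / lam) ^ q) := h1
    _ = g x := by rw [h2, hgdef]; ring
  have key : (∫⁻ x, ENNReal.ofReal (N (|f x| / lam)) ∂μ) ≤ 1 := by
    calc (∫⁻ x, ENNReal.ofReal (N (|f x| / lam)) ∂μ)
        ≤ ∫⁻ x, ENNReal.ofReal (g x) ∂μ :=
          lintegral_mono fun x => ENNReal.ofReal_le_ofReal (hptx x)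
    _ = ENNReal.ofReal (∫ x, g x ∂μ) :=
          (ofReal_integral_eq_lintegral_ofReal hgint (ae_of_all _ hgnn)).symm
    _ ≤ ENNReal.ofReal 1 := ENNReal.ofReal_le_ofReal hgle
    _ = 1 := ENNReal.ofReal_one
  refine ⟨key, ?_⟩
  have hevenx : ∀ x, N (f x / lam) = N (|f x| / lam) := by
    intro x
    rcases abs_cases (f x) with ⟨h, _⟩ | ⟨h, _⟩
    · rw [h]
    · rw [h, neg_div, hNeven]
  have hcond : (∫⁻ x, ENNReal.ofReal (N (f x / lam)) ∂μ) ≤ 1 := by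
    simpa only [hevenx] using key
  rw [luxemburgNorm]
  exact iInf_le_of_le lam (iInf_le_of_le hlampos (iInf_le_of_le hcond le_rfl))
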